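/- Let φ : ℝ → ℝ be convex and differentiable with Lipschitz derivative: |φ'(u) − φ'(v)| ≤ L*|u−v|. Let ρ be a probability measure on Z = X × {−1,1} and let f_ρ^φ be the pointwise minimizer of the conditional φ-risk, so that ∫_Z y(f(x) − f_ρ^φ(x)) φ'(y f_ρ^φ(x)) dρ = 0 for all bounded measurable f. Then for any bounded measurable f, E^φ(f) − E^φ(f_ρ^φ) ≤ L* · ‖f − f_ρ^φ‖²_{L²(ρ_X)}. -/

import Mathlib

open MeasureTheory

lemma taylor_aux (φ : ℝ → ℝ) (L : ℝ) (hdiff : Differentiable ℝ φ)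
    (hLip : ∀ u v : ℝ, |deriv φ u - deriv φ v| ≤ L * |u - v|)
    (a b : ℝ) :
    φ a - φ b - deriv φ b * (a - b) ≤ L / 2 * (a - b) ^ 2 := by
  have hL : 0 ≤ L := by
    have h := hLip 0 1
    have := abs_nonneg (deriv φ 0 - deriv φ 1)
    simp at h; linarith
  have hc : Continuous (deriv φ) := by
    have : LipschitzWith ⟨L, hL⟩ (deriv φ) := by
      apply LipschitzWith.of_dist_le_mul
      intro u v
      rw [Real.dist_eq, Real.dist_eq]; exact hLip u v
    exact this.continuous
  set g : ℝ → ℝ := fun t => φ (b + t * (a - b)) with hg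
  have hg' : ∀ t : ℝ, HasDerivAt g ((a - b) * deriv φ (b + t * (a - b))) t := by
    intro t
    have h1 : HasDerivAt (fun t : ℝ => b + t * (a - b)) (a - b) t := by
      simpa using ((hasDerivAt_id t).mul_const (a - b)).const_add b
    have h2 := ((hdiff (b + t * (a - b))).hasDerivAt).comp t h1
    have h3 : (a - b) * deriv φ (b + t * (a - b)) = deriv φ (b + t * (a - b)) * (a - b) :=
      mul_comm _ _
    rw [h3]; exact h2
  have hcont : Continuous fun t : ℝ => (a - b) * deriv φ (b + t * (a - b)) := by
    exact continuous_const.mul (hc.comp (by continuity))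
  have hint : φ a - φ b = ∫ t in (0:ℝ)..1, (a - b) * deriv φ (b + t * (a - b)) := by
    have := intervalIntegral.integral_eq_sub_of_hasDerivAt
      (f := g) (f' := fun t => (a - b) * deriv φ (b + t * (a - b)))
      (a := 0) (b := 1) (fun t _ => hg' t) (hcont.intervalIntegrable 0 1)
    rw [this]; simp [hg]
  have hkey : φ a - φ b - deriv φ b * (a - b)
      = ∫ t in (0:ℝ)..1, ((a - b) * deriv φ (b + t * (a - b)) - (a - b) * deriv φ b) := by
    rw [intervalIntegral.integral_sub (hcont.intervalIntegrable 0 1)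
      (intervalIntegrable_const)]
    rw [intervalIntegral.integral_const, ← hint]
    simp
    ring
  rw [hkey]
  have hmono : (∫ t in (0:ℝ)..1, ((a - b) * deriv φ (b + t * (a - b)) - (a - b) * deriv φ b))
      ≤ ∫ t in (0:ℝ)..1, L * t * (a - b) ^ 2 := by
    apply intervalIntegral.integral_mono_on (by norm_num)
    · exact (hcont.sub continuous_const).intervalIntegrable 0 1
    · exact (Continuous.intervalIntegrable (by continuity) 0 1)
    · intro t ht
      have h1 : (a - b) * deriv φ (b + t * (a - b)) - (a - b) * deriv φ b
          = (a - b) * (deriv φ (b + t * (a - b)) - deriv φ b) := by ring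
      rw [h1]
      calc (a - b) * (deriv φ (b + t * (a - b)) - deriv φ b)
          ≤ |a - b| * |deriv φ (b + t * (a - b)) - deriv φ b| := by
            rw [← abs_mul]; exact le_abs_self _
        _ ≤ |a - b| * (L * |b + t * (a - b) - b|) := by
            exact mul_le_mul_of_nonneg_left (hLip _ _) (abs_nonneg _)
        _ = L * t * (a - b) ^ 2 := by
            rw [show b + t * (a - b) - b = t * (a - b) by ring, abs_mul,
              abs_of_nonneg ht.1]
            have h2 : |a - b| * |a - b| = (a - b) ^ 2 := by
              rw [← abs_mul, abs_mul_self]; ring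
            linear_combination (L * t) * h2
  calc _ ≤ ∫ t in (0:ℝ)..1, L * t * (a - b) ^ 2 := hmono
    _ = L / 2 * (a - b) ^ 2 := by
        have : ∀ t : ℝ, L * t * (a - b) ^ 2 = (L * (a-b)^2) * t := by intro t; ring
        simp_rw [this]
        rw [intervalIntegral.integral_const_mul]
        rw [integral_id]
        ring

theorem smooth_loss_excess_risk_le
    {X : Type*} [MeasurableSpace X]
    (φ : ℝ → ℝ) (L : ℝ)
    (hconv : ConvexOn ℝ Set.univ φ)
    (hdiff : Differentiable ℝ φ)
    (hLip : ∀ u v : ℝ, |deriv φ u - deriv φ v| ≤ L * |u - v|)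
    (ρ : Measure (X × ℝ)) [IsProbabilityMeasure ρ]
    (hy : ∀ᵐ z ∂ρ, z.2 = 1 ∨ z.2 = -1)
    (fρ : X → ℝ) (hfρm : Measurable fρ) (hfρb : ∃ B, ∀ x, |fρ x| ≤ B)
    (horth : ∀ f : X → ℝ, Measurable f → (∃ B, ∀ x, |f x| ≤ B) →
      ∫ z, z.2 * (f z.1 - fρ z.1) * deriv φ (z.2 * fρ z.1) ∂ρ = 0)
    (f : X → ℝ) (hfm : Measurable f) (hfb : ∃ B, ∀ x, |f x| ≤ B) :
    (∫ z, φ (z.2 * f z.1) ∂ρ) - (∫ z, φ (z.2 * fρ z.1) ∂ρ) ≤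
      L * ∫ x, (f x - fρ x) ^ 2 ∂(ρ.map Prod.fst) := by
  obtain ⟨Bf, hBf⟩ := hfb
  obtain ⟨Bρ, hBρ⟩ := hfρb
  have hL : 0 ≤ L := by
    have h := hLip 0 1
    have := abs_nonneg (deriv φ 0 - deriv φ 1)
    simp at h; linarith
  have hφc : Continuous φ := hdiff.continuous
  have hφ'c : Continuous (deriv φ) := by
    have : LipschitzWith ⟨L, hL⟩ (deriv φ) := by
      apply LipschitzWith.of_dist_le_mul
      intro u v
      rw [Real.dist_eq, Real.dist_eq]; exact hLip u v
    exact this.continuous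
  set B : ℝ := max Bf Bρ with hB
  -- bounds for φ and deriv φ on [-B, B]
  obtain ⟨M1, hM1⟩ := (isCompact_Icc (a := -B) (b := B)).exists_bound_of_continuousOn
    hφc.continuousOn
  obtain ⟨M2, hM2⟩ := (isCompact_Icc (a := -B) (b := B)).exists_bound_of_continuousOn
    hφ'c.continuousOn
  -- measurability
  have m1 : Measurable fun z : X × ℝ => φ (z.2 * f z.1) :=
    hφc.measurable.comp (measurable_snd.mul (hfm.comp measurable_fst))
  have m2 : Measurable fun z : X × ℝ => φ (z.2 * fρ z.1) :=
    hφc.measurable.comp (measurable_snd.mul (hfρm.comp measurable_fst))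
  have m3 : Measurable fun z : X × ℝ =>
      z.2 * (f z.1 - fρ z.1) * deriv φ (z.2 * fρ z.1) :=
    (measurable_snd.mul ((hfm.comp measurable_fst).sub (hfρm.comp measurable_fst))).mul
      (hφ'c.measurable.comp (measurable_snd.mul (hfρm.comp measurable_fst)))
  have m4 : Measurable fun z : X × ℝ => (f z.1 - fρ z.1) ^ 2 :=
    ((hfm.comp measurable_fst).sub (hfρm.comp measurable_fst)).pow_const 2
  -- a.e. facts
  have hmemf : ∀ᵐ z ∂ρ, z.2 * f z.1 ∈ Set.Icc (-B) B := by
    filter_upwards [hy] with z hz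
    have h1 : |f z.1| ≤ B := le_trans (hBf z.1) (le_max_left _ _)
    have habs : |z.2 * f z.1| ≤ B := by
      rcases hz with h | h <;> rw [h] <;> simpa using h1
    exact Set.mem_Icc.mpr (abs_le.mp habs)
  have hmemfρ : ∀ᵐ z ∂ρ, z.2 * fρ z.1 ∈ Set.Icc (-B) B := by
    filter_upwards [hy] with z hz
    have h1 : |fρ z.1| ≤ B := le_trans (hBρ z.1) (le_max_right _ _)
    have habs : |z.2 * fρ z.1| ≤ B := by
      rcases hz with h | h <;> rw [h] <;> simpa using h1
    exact Set.mem_Icc.mpr (abs_le.mp habs)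
  -- integrability
  have i1 : Integrable (fun z : X × ℝ => φ (z.2 * f z.1)) ρ := by
    refine (integrable_const M1).mono' m1.aestronglyMeasurable ?_
    filter_upwards [hmemf] with z hz using hM1 _ hz
  have i2 : Integrable (fun z : X × ℝ => φ (z.2 * fρ z.1)) ρ := by
    refine (integrable_const M1).mono' m2.aestronglyMeasurable ?_
    filter_upwards [hmemfρ] with z hz using hM1 _ hz
  have i3 : Integrable (fun z : X × ℝ =>
      z.2 * (f z.1 - fρ z.1) * deriv φ (z.2 * fρ z.1)) ρ := by
    refine (integrable_const ((Bf + Bρ) * M2)).mono' m3.aestronglyMeasurable ?_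
    filter_upwards [hy, hmemfρ] with z hz hz2
    have hz1 : |z.2| = 1 := by rcases hz with h | h <;> rw [h] <;> norm_num
    have h1 : |z.2 * (f z.1 - fρ z.1)| ≤ Bf + Bρ := by
      rw [abs_mul, hz1, one_mul]
      calc |f z.1 - fρ z.1| ≤ |f z.1| + |fρ z.1| := abs_sub _ _
        _ ≤ Bf + Bρ := add_le_add (hBf _) (hBρ _)
    have h2 : |deriv φ (z.2 * fρ z.1)| ≤ M2 := hM2 _ hz2
    calc ‖z.2 * (f z.1 - fρ z.1) * deriv φ (z.2 * fρ z.1)‖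
        = |z.2 * (f z.1 - fρ z.1)| * |deriv φ (z.2 * fρ z.1)| := by
          rw [Real.norm_eq_abs, abs_mul]
      _ ≤ (Bf + Bρ) * M2 :=
          mul_le_mul h1 h2 (abs_nonneg _) (le_trans (abs_nonneg _) h1)
  have i4 : Integrable (fun z : X × ℝ => (f z.1 - fρ z.1) ^ 2) ρ := by
    refine (integrable_const ((Bf + Bρ) ^ 2)).mono' m4.aestronglyMeasurable ?_
    refine Filter.Eventually.of_forall fun z => ?_
    have h1 : |f z.1 - fρ z.1| ≤ Bf + Bρ :=
      (abs_sub _ _).trans (add_le_add (hBf _) (hBρ _))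
    have : (f z.1 - fρ z.1) ^ 2 ≤ (Bf + Bρ) ^ 2 := by
      rw [← sq_abs]
      exact pow_le_pow_left₀ (abs_nonneg _) h1 2
    simpa [abs_of_nonneg (sq_nonneg (f z.1 - fρ z.1))] using this
  -- pointwise a.e. inequality
  have hptwise : ∀ᵐ z ∂ρ, φ (z.2 * f z.1) - φ (z.2 * fρ z.1) ≤
      z.2 * (f z.1 - fρ z.1) * deriv φ (z.2 * fρ z.1) + L / 2 * (f z.1 - fρ z.1) ^ 2 := by
    filter_upwards [hy] with z hz
    have ht := taylor_aux φ L hdiff hLip (z.2 * f z.1) (z.2 * fρ z.1)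
    have hy2 : z.2 ^ 2 = 1 := by rcases hz with h | h <;> rw [h] <;> norm_num
    have e1 : z.2 * f z.1 - z.2 * fρ z.1 = z.2 * (f z.1 - fρ z.1) := by ring
    rw [e1] at ht
    have e2 : (z.2 * (f z.1 - fρ z.1)) ^ 2 = (f z.1 - fρ z.1) ^ 2 := by
      rw [mul_pow, hy2, one_mul]
    rw [e2] at ht
    nlinarith [ht]
  -- main chain
  have hI : (∫ z, φ (z.2 * f z.1) ∂ρ) - (∫ z, φ (z.2 * fρ z.1) ∂ρ) ≤
      L / 2 * ∫ z, (f z.1 - fρ z.1) ^ 2 ∂ρ := by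
    rw [← integral_sub i1 i2]
    have h0 : ∫ z, (φ (z.2 * f z.1) - φ (z.2 * fρ z.1)) ∂ρ ≤
        ∫ z, (z.2 * (f z.1 - fρ z.1) * deriv φ (z.2 * fρ z.1)
          + L / 2 * (f z.1 - fρ z.1) ^ 2) ∂ρ :=
      integral_mono_ae (i1.sub i2) (i3.add (i4.const_mul (L / 2))) hptwise
    rw [integral_add i3 (i4.const_mul (L / 2)),
      horth f hfm ⟨Bf, hBf⟩, integral_const_mul, zero_add] at h0
    exact h0
  have hmap : ∫ z, (f z.1 - fρ z.1) ^ 2 ∂ρ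
      = ∫ x, (f x - fρ x) ^ 2 ∂(ρ.map Prod.fst) := by
    exact (integral_map measurable_fst.aemeasurable
      (((hfm.sub hfρm).pow_const 2).aestronglyMeasurable :
        AEStronglyMeasurable (fun x : X => (f x - fρ x) ^ 2) (ρ.map Prod.fst))).symm
  have hnonneg : 0 ≤ ∫ x, (f x - fρ x) ^ 2 ∂(ρ.map Prod.fst) :=
    integral_nonneg fun x => sq_nonneg _
  rw [hmap] at hI
  nlinarith [hI, hnonneg]
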